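/- arXiv:1612.06069 — 3 statements merged into one kernel-verified Lean document; each statement's English description precedes it below -/
import Mathlib

section
/- Morton decoding inverts Morton encoding: given z = 2*dilate(i) + dilate(j), masking z with the bit pattern having 1s at all odd positions and right-shifting by 1 yields dilate(i), and masking z with the pattern having 1s at all even positions yields dilate(j); un-dilating then recovers i and j. -/
/-- Dilation: insert a zero bit between every two consecutive bits. -/
def dilate (k : ℕ) : ℕ := ∑ t ∈ Finset.range (k + 1), (k.testBit t).toNat * 4 ^ t

/-- Un-dilation: collect the bits at even positions. -/
def undilate (z : ℕ) : ℕ := ∑ t ∈ Finset.range (z + 1), (z.testBit (2 * t)).toNat * 2 ^ t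

lemma bool_testBit_high (b : Bool) (k : ℕ) (h : 1 ≤ k) : (b.toNat).testBit k = false := by
  apply Nat.testBit_lt_two_pow
  calc b.toNat ≤ 1 := Bool.toNat_le b
  _ < 2 ^ k := by exact Nat.one_lt_two_pow (by omega)

lemma digit4_lt (g : ℕ → ℕ) (N : ℕ) (hg : ∀ t, g t < 4) :
    ∑ t ∈ Finset.range N, g t * 4 ^ t < 4 ^ N := by
  induction N with
  | zero => simp
  | succ N ih =>
    rw [Finset.sum_range_succ, pow_succ]
    have h3 : g N * 4 ^ N ≤ 3 * 4 ^ N := Nat.mul_le_mul_right _ (by have := hg N; omega)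
    omega

lemma digit4_testBit (g : ℕ → ℕ) (N : ℕ) (hg : ∀ t, g t < 4) (n : ℕ) :
    (∑ t ∈ Finset.range N, g t * 4 ^ t).testBit n =
      if n < 2 * N then (g (n / 2)).testBit (n % 2) else false := by
  induction N generalizing n with
  | zero => simp
  | succ N ih =>
    rw [Finset.sum_range_succ]
    have h4 : (4 : ℕ) ^ N = 2 ^ (2 * N) := by rw [pow_mul]; norm_num
    have hlt : ∑ t ∈ Finset.range N, g t * 4 ^ t < 2 ^ (2 * N) := by
      rw [← h4]; exact digit4_lt g N hg
    have : g N * 4 ^ N + ∑ t ∈ Finset.range N, g t * 4 ^ t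
        = 2 ^ (2 * N) * g N + ∑ t ∈ Finset.range N, g t * 4 ^ t := by rw [h4]; ring
    rw [add_comm, this, Nat.testBit_two_pow_mul_add _ hlt]
    by_cases h : n < 2 * N
    · rw [if_pos h, ih n, if_pos h, if_pos (by omega)]
    · rw [if_neg h]
      by_cases h2 : n < 2 * (N + 1)
      · rw [if_pos h2]
        have hd : n / 2 = N := by omega
        have hm : n % 2 = n - 2 * N := by omega
        rw [hd, hm]
      · rw [if_neg h2]
        apply Nat.testBit_lt_two_pow
        calc g N < 4 := hg N
        _ ≤ 2 ^ (n - 2 * N) := by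
            have : 2 ≤ n - 2 * N := by omega
            calc (4:ℕ) = 2 ^ 2 := by norm_num
            _ ≤ 2 ^ (n - 2 * N) := Nat.pow_le_pow_right (by norm_num) this

lemma sum2 (k N : ℕ) : ∑ t ∈ Finset.range N, (k.testBit t).toNat * 2 ^ t = k % 2 ^ N := by
  induction N with
  | zero => simp [Nat.mod_one]
  | succ N ih =>
    rw [Finset.sum_range_succ, ih, pow_succ, Nat.mod_mul, Nat.testBit_eq_decide_div_mod_eq]
    rcases Nat.mod_two_eq_zero_or_one (k / 2 ^ N) with h | h <;> simp [h]

lemma dilate_eq (k N : ℕ) (h : k < 2 ^ N) :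
    dilate k = ∑ t ∈ Finset.range N, (k.testBit t).toNat * 4 ^ t := by
  have key : ∀ t, (k.testBit t).toNat * 4 ^ t ≠ 0 → t < k + 1 ∧ t < N := by
    intro t ht
    constructor
    · by_contra hc
      have : k.testBit t = false := Nat.testBit_lt_two_pow
        (lt_of_lt_of_le ((Nat.lt_two_pow_self (n := k))) (Nat.pow_le_pow_right (by norm_num) (by omega)))
      simp [this] at ht
    · by_contra hc
      have : k.testBit t = false := Nat.testBit_lt_two_pow
        (lt_of_lt_of_le h (Nat.pow_le_pow_right (by norm_num) (by omega)))
      simp [this] at ht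
  have e1 := Finset.sum_subset (Finset.range_subset_range.2 (le_max_left (k+1) N))
    (f := fun t => (k.testBit t).toNat * 4 ^ t) (by
      intro x _ hx
      simp only [Finset.mem_range, not_lt] at hx
      by_contra hc
      have := key x hc
      omega)
  have e2 := Finset.sum_subset (Finset.range_subset_range.2 (le_max_right (k+1) N))
    (f := fun t => (k.testBit t).toNat * 4 ^ t) (by
      intro x _ hx
      simp only [Finset.mem_range, not_lt] at hx
      by_contra hc
      have := key x hc
      omega)
  unfold dilate
  rw [e1, ← e2]

lemma testBit_dilate (k n : ℕ) :
    (dilate k).testBit n = (decide (n % 2 = 0) && k.testBit (n / 2)) := by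
  unfold dilate
  rw [digit4_testBit _ _ (fun t => by cases k.testBit t <;> simp) n]
  by_cases h : n < 2 * (k + 1)
  · rw [if_pos h]
    rcases Nat.mod_two_eq_zero_or_one n with h2 | h2
    · rw [h2]
      cases hb : k.testBit (n / 2) <;> simp [hb, Nat.testBit_eq_decide_div_mod_eq]
    · rw [h2, bool_testBit_high _ _ le_rfl]
      simp [h2]
  · rw [if_neg h]
    have : k.testBit (n / 2) = false := Nat.testBit_lt_two_pow
      (lt_of_lt_of_le ((Nat.lt_two_pow_self (n := k))) (Nat.pow_le_pow_right (by norm_num) (by omega)))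
    simp [this]

lemma undilate_dilate (k : ℕ) : undilate (dilate k) = k := by
  unfold undilate
  have hbit : ∀ t, (dilate k).testBit (2 * t) = k.testBit t := by
    intro t
    rw [testBit_dilate]
    simp [Nat.mul_div_cancel_left, Nat.mul_mod_right]
  have hk : k ≤ dilate k := by
    have : k % 2 ^ (k + 1) = k := Nat.mod_eq_of_lt
      (lt_of_lt_of_le ((Nat.lt_two_pow_self (n := k))) (Nat.pow_le_pow_right (by norm_num) (by omega)))
    calc k = ∑ t ∈ Finset.range (k + 1), (k.testBit t).toNat * 2 ^ t := by rw [sum2, this]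
    _ ≤ ∑ t ∈ Finset.range (k + 1), (k.testBit t).toNat * 4 ^ t := by
        apply Finset.sum_le_sum
        intro t _
        exact Nat.mul_le_mul_left _ (Nat.pow_le_pow_left (by norm_num) t)
    _ = dilate k := rfl
  calc ∑ t ∈ Finset.range (dilate k + 1), ((dilate k).testBit (2 * t)).toNat * 2 ^ t
      = ∑ t ∈ Finset.range (dilate k + 1), (k.testBit t).toNat * 2 ^ t := by
        apply Finset.sum_congr rfl; intro t _; rw [hbit]
  _ = k % 2 ^ (dilate k + 1) := sum2 k _
  _ = k := Nat.mod_eq_of_lt (lt_of_le_of_lt (le_trans hk (Nat.le_of_lt (Nat.lt_two_pow_self)))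
        (Nat.pow_lt_pow_right (by norm_num) (by omega)))

theorem morton_decode (m i j z : ℕ) (hi : i < 2 ^ m) (hj : j < 2 ^ m)
    (hz : z = 2 * dilate i + dilate j) :
    (z &&& ∑ t ∈ Finset.range m, 2 ^ (2 * t + 1)) >>> 1 = dilate i ∧
      z &&& (∑ t ∈ Finset.range m, 2 ^ (2 * t)) = dilate j ∧
      undilate ((z &&& ∑ t ∈ Finset.range m, 2 ^ (2 * t + 1)) >>> 1) = i ∧
      undilate (z &&& ∑ t ∈ Finset.range m, 2 ^ (2 * t)) = j := by
  -- rewrite z as a digit-4 sum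
  have hzsum : z = ∑ t ∈ Finset.range m, (2 * (i.testBit t).toNat + (j.testBit t).toNat) * 4 ^ t := by
    rw [hz, dilate_eq i m hi, dilate_eq j m hj, Finset.mul_sum, ← Finset.sum_add_distrib]
    apply Finset.sum_congr rfl
    intro t _
    ring
  have hzdig : ∀ t, 2 * (i.testBit t).toNat + (j.testBit t).toNat < 4 := by
    intro t; cases i.testBit t <;> cases j.testBit t <;> simp
  have hzbit : ∀ n, z.testBit n = if n < 2 * m then
      (if n % 2 = 0 then j.testBit (n / 2) else i.testBit (n / 2)) else false := by
    intro n
    rw [hzsum, digit4_testBit _ _ hzdig]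
    by_cases h : n < 2 * m
    · rw [if_pos h, if_pos h]
      rcases Nat.mod_two_eq_zero_or_one n with h2 | h2 <;> rw [h2] <;>
        cases hbi : i.testBit (n / 2) <;> cases hbj : j.testBit (n / 2) <;>
        simp [hbi, hbj, h2, Nat.testBit_eq_decide_div_mod_eq]
    · rw [if_neg h, if_neg h]
  -- mask bits
  have hmaskE : ∀ n, (∑ t ∈ Finset.range m, 2 ^ (2 * t)).testBit n
      = (decide (n < 2 * m) && decide (n % 2 = 0)) := by
    intro n
    have : ∑ t ∈ Finset.range m, 2 ^ (2 * t) = ∑ t ∈ Finset.range m, 1 * 4 ^ t := by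
      apply Finset.sum_congr rfl; intro t _; rw [one_mul, pow_mul]; norm_num
    rw [this, digit4_testBit _ _ (fun t => by norm_num)]
    by_cases h : n < 2 * m
    · rw [if_pos h]
      rcases Nat.mod_two_eq_zero_or_one n with h2 | h2 <;>
        simp [h2, h, Nat.testBit_eq_decide_div_mod_eq]
    · simp [h]
  have hmaskO : ∀ n, (∑ t ∈ Finset.range m, 2 ^ (2 * t + 1)).testBit n
      = (decide (n < 2 * m) && decide (n % 2 = 1)) := by
    intro n
    have : ∑ t ∈ Finset.range m, 2 ^ (2 * t + 1) = ∑ t ∈ Finset.range m, 2 * 4 ^ t := by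
      apply Finset.sum_congr rfl; intro t _; rw [pow_succ, pow_mul]; ring
    rw [this, digit4_testBit _ _ (fun t => by norm_num)]
    by_cases h : n < 2 * m
    · rw [if_pos h]
      rcases Nat.mod_two_eq_zero_or_one n with h2 | h2 <;>
        simp [h2, h, Nat.testBit_eq_decide_div_mod_eq]
    · simp [h]
  have hibit : ∀ t, m ≤ t → i.testBit t = false := fun t ht => Nat.testBit_lt_two_pow
    (lt_of_lt_of_le hi (Nat.pow_le_pow_right (by norm_num) ht))
  have hjbit : ∀ t, m ≤ t → j.testBit t = false := fun t ht => Nat.testBit_lt_two_pow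
    (lt_of_lt_of_le hj (Nat.pow_le_pow_right (by norm_num) ht))
  have h1 : (z &&& ∑ t ∈ Finset.range m, 2 ^ (2 * t + 1)) >>> 1 = dilate i := by
    apply Nat.eq_of_testBit_eq
    intro n
    rw [Nat.testBit_shiftRight, Nat.testBit_and, hzbit, hmaskO, testBit_dilate]
    rcases Nat.mod_two_eq_zero_or_one n with h2 | h2
    · have hm1 : (1 + n) % 2 = 1 := by omega
      have hd : (1 + n) / 2 = n / 2 := by omega
      by_cases h : 1 + n < 2 * m
      · simp [h, hm1, hd, h2]
      · have : m ≤ n / 2 := by omega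
        simp [h, h2, hibit _ this]
    · simp [h2, Nat.mod_two_eq_zero_or_one, (by omega : (1 + n) % 2 = 0)]
  have h2 : z &&& (∑ t ∈ Finset.range m, 2 ^ (2 * t)) = dilate j := by
    apply Nat.eq_of_testBit_eq
    intro n
    rw [Nat.testBit_and, hzbit, hmaskE, testBit_dilate]
    rcases Nat.mod_two_eq_zero_or_one n with hp | hp
    · by_cases h : n < 2 * m
      · simp [h, hp]
      · have : m ≤ n / 2 := by omega
        simp [h, hp, hjbit _ this]
    · simp [hp]
  exact ⟨h1, h2, by rw [h1, undilate_dilate], by rw [h2, undilate_dilate]⟩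
end

section
/- The Morton-hybrid encoding map (i,j) ↦ M(i / 2^β, j / 2^β) * 4^β + (i % 2^β) * 2^β + (j % 2^β), where M is the Morton encoding, is a bijection from pairs (i,j) with i, j < 2^m onto {0,...,4^m - 1}, for any β ≤ m. -/
lemma dilate_eq_sum (n k : ℕ) (h : k < 2 ^ n) :
    dilate k = ∑ t ∈ Finset.range n, (k.testBit t).toNat * 4 ^ t := by
  have hk : k < 2 ^ (k + 1) :=
    lt_of_lt_of_le (Nat.lt_two_pow_self (n := k)) (Nat.pow_le_pow_right (by norm_num) (Nat.le_succ k))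
  rcases le_total n (k + 1) with hn | hn
  · refine (Finset.sum_subset (Finset.range_subset_range.2 hn) ?_).symm
    intro t _ ht
    have : k < 2 ^ t := lt_of_lt_of_le h (Nat.pow_le_pow_right (by norm_num)
      (le_of_not_gt (by simpa [Finset.mem_range] using ht)))
    simp [Nat.testBit_eq_false_of_lt this]
  · refine Finset.sum_subset (Finset.range_subset_range.2 hn) ?_
    intro t _ ht
    have : k < 2 ^ t := lt_of_lt_of_le hk (Nat.pow_le_pow_right (by norm_num)
      (le_of_not_gt (by simpa [Finset.mem_range] using ht)))
    simp [Nat.testBit_eq_false_of_lt this]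

lemma dilate_rec (k : ℕ) : dilate k = k % 2 + 4 * dilate (k / 2) := by
  have h1 : k < 2 ^ (k + 1) :=
    lt_of_lt_of_le (Nat.lt_two_pow_self (n := k)) (Nat.pow_le_pow_right (by norm_num) (Nat.le_succ k))
  have h2 : k / 2 < 2 ^ k := lt_of_le_of_lt (Nat.div_le_self _ _) (Nat.lt_two_pow_self (n := k))
  rw [dilate_eq_sum (k + 1) k h1, dilate_eq_sum k (k / 2) h2,
    Finset.sum_range_succ' (fun t => (k.testBit t).toNat * 4 ^ t)]
  have hA : ∑ t ∈ Finset.range k, (k.testBit (t + 1)).toNat * 4 ^ (t + 1)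
      = 4 * ∑ t ∈ Finset.range k, ((k / 2).testBit t).toNat * 4 ^ t := by
    rw [Finset.mul_sum]
    refine Finset.sum_congr rfl fun t _ => ?_
    rw [Nat.testBit_div_two]; ring
  have hB : (k.testBit 0).toNat * 4 ^ 0 = k % 2 := by
    rcases Nat.mod_two_eq_zero_or_one k with h | h <;> simp [Nat.testBit_zero, h]
  rw [hA, hB]; ring

lemma dilate_zero : dilate 0 = 0 := by simp [dilate]

lemma dilate_bound {n a : ℕ} (h : a < 2 ^ n) : 3 * dilate a + 1 ≤ 4 ^ n := by
  induction n generalizing a with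
  | zero => interval_cases a; simp [dilate_zero]
  | succ n ih =>
    rw [pow_succ] at h
    have ha2 : a / 2 < 2 ^ n := by omega
    have := ih ha2
    rw [dilate_rec a, pow_succ]
    omega

lemma morton_inj {n a b c d : ℕ} (ha : a < 2 ^ n) (hb : b < 2 ^ n) (hc : c < 2 ^ n)
    (hd : d < 2 ^ n) (h : 2 * dilate a + dilate b = 2 * dilate c + dilate d) :
    a = c ∧ b = d := by
  induction n generalizing a b c d with
  | zero => simp at ha hb hc hd; omega
  | succ n ih =>
    rw [pow_succ] at ha hb hc hd
    have ha2 : a / 2 < 2 ^ n := by omega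
    have hb2 : b / 2 < 2 ^ n := by omega
    have hc2 : c / 2 < 2 ^ n := by omega
    have hd2 : d / 2 < 2 ^ n := by omega
    rw [dilate_rec a, dilate_rec b, dilate_rec c, dilate_rec d] at h
    have h3 : a % 2 = c % 2 ∧ b % 2 = d % 2 ∧
        2 * dilate (a / 2) + dilate (b / 2) = 2 * dilate (c / 2) + dilate (d / 2) := by
      omega
    obtain ⟨h4, h5⟩ := ih ha2 hb2 hc2 hd2 h3.2.2
    omega

lemma split_unique {K A l A' l' : ℕ} (hl : l < K) (hl' : l' < K)
    (h : A * K + l = A' * K + l') : A = A' ∧ l = l' := by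
  have hK : 0 < K := by omega
  have e1 : (A * K + l) / K = A := by
    rw [mul_comm, Nat.mul_add_div hK, Nat.div_eq_of_lt hl, add_zero]
  have e2 : (A' * K + l') / K = A' := by
    rw [mul_comm, Nat.mul_add_div hK, Nat.div_eq_of_lt hl', add_zero]
  have e3 : (A * K + l) % K = l := by
    rw [mul_comm, Nat.mul_add_mod, Nat.mod_eq_of_lt hl]
  have e4 : (A' * K + l') % K = l' := by
    rw [mul_comm, Nat.mul_add_mod, Nat.mod_eq_of_lt hl']
  constructor
  · rw [← e1, ← e2, h]
  · rw [← e3, ← e4, h]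

theorem morton_hybrid_bijOn (m β : ℕ) (hβ : β ≤ m) :
    Set.BijOn
      (fun p : ℕ × ℕ =>
        (2 * dilate (p.1 / 2 ^ β) + dilate (p.2 / 2 ^ β)) * 4 ^ β +
          (p.1 % 2 ^ β) * 2 ^ β + p.2 % 2 ^ β)
      {p : ℕ × ℕ | p.1 < 2 ^ m ∧ p.2 < 2 ^ m} (Set.Iio (4 ^ m)) := by
  set F := fun p : ℕ × ℕ =>
        (2 * dilate (p.1 / 2 ^ β) + dilate (p.2 / 2 ^ β)) * 4 ^ β +
          (p.1 % 2 ^ β) * 2 ^ β + p.2 % 2 ^ β with hF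
  set S : Set (ℕ × ℕ) := {p : ℕ × ℕ | p.1 < 2 ^ m ∧ p.2 < 2 ^ m} with hSdef
  have h2pos : 0 < 2 ^ β := Nat.pow_pos (n := β) (by norm_num)
  have h44 : (4:ℕ) ^ (m - β) * 4 ^ β = 4 ^ m := by
    rw [← pow_add]; congr 1; omega
  have h4β : (4:ℕ) ^ β = 2 ^ β * 2 ^ β := by
    rw [show (4:ℕ) = 2 * 2 from rfl, mul_pow]
  have hdivlt : ∀ i : ℕ, i < 2 ^ m → i / 2 ^ β < 2 ^ (m - β) := by
    intro i hi
    rw [Nat.div_lt_iff_lt_mul h2pos, ← pow_add]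
    have : m - β + β = m := by omega
    rw [this]; exact hi
  -- low parts bound
  have hlow : ∀ i j : ℕ, i % 2 ^ β * 2 ^ β + j % 2 ^ β < 4 ^ β := by
    intro i j
    have h1 : i % 2 ^ β < 2 ^ β := Nat.mod_lt _ h2pos
    have h2 : j % 2 ^ β < 2 ^ β := Nat.mod_lt _ h2pos
    rw [h4β]
    nlinarith
  have hmlt : ∀ i j : ℕ, i < 2 ^ m → j < 2 ^ m →
      2 * dilate (i / 2 ^ β) + dilate (j / 2 ^ β) < 4 ^ (m - β) := by
    intro i j hi hj
    have b1 := dilate_bound (hdivlt i hi)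
    have b2 := dilate_bound (hdivlt j hj)
    omega
  have hmaps : Set.MapsTo F S (Set.Iio (4 ^ m)) := by
    intro p hp
    obtain ⟨hp1, hp2⟩ := hp
    simp only [Set.mem_Iio, hF]
    calc (2 * dilate (p.1 / 2 ^ β) + dilate (p.2 / 2 ^ β)) * 4 ^ β +
          (p.1 % 2 ^ β) * 2 ^ β + p.2 % 2 ^ β
        < (2 * dilate (p.1 / 2 ^ β) + dilate (p.2 / 2 ^ β)) * 4 ^ β + 4 ^ β := by
          have := hlow p.1 p.2; omega
      _ = (2 * dilate (p.1 / 2 ^ β) + dilate (p.2 / 2 ^ β) + 1) * 4 ^ β := by ring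
      _ ≤ 4 ^ (m - β) * 4 ^ β :=
          Nat.mul_le_mul_right _ (hmlt p.1 p.2 hp1 hp2)
      _ = 4 ^ m := h44
  have hinj : Set.InjOn F S := by
    intro p hp q hq hpq
    obtain ⟨hp1, hp2⟩ := hp
    obtain ⟨hq1, hq2⟩ := hq
    simp only [hF] at hpq
    rw [add_assoc, add_assoc] at hpq
    obtain ⟨hM, hL⟩ := split_unique (by have := hlow p.1 p.2; omega)
      (by have := hlow q.1 q.2; omega) hpq
    obtain ⟨hr1, hr2⟩ := split_unique (Nat.mod_lt _ h2pos) (Nat.mod_lt _ h2pos) hL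
    obtain ⟨hq1', hq2'⟩ := morton_inj (hdivlt p.1 hp1) (hdivlt p.2 hp2)
      (hdivlt q.1 hq1) (hdivlt q.2 hq2) hM
    have e1 := Nat.div_add_mod p.1 (2 ^ β)
    have e2 := Nat.div_add_mod q.1 (2 ^ β)
    have e3 := Nat.div_add_mod p.2 (2 ^ β)
    have e4 := Nat.div_add_mod q.2 (2 ^ β)
    have : p.1 = q.1 := by rw [← e1, ← e2, hq1', hr1]
    have : p.2 = q.2 := by rw [← e3, ← e4, hq2', hr2]
    exact Prod.ext ‹p.1 = q.1› ‹p.2 = q.2›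
  refine ⟨hmaps, hinj, ?_⟩
  -- surjectivity via cardinality
  have hSfin : S = ↑(Finset.range (2 ^ m) ×ˢ Finset.range (2 ^ m)) := by
    ext p
    simp [hSdef, Finset.mem_product]
  have hScard : S.ncard = 4 ^ m := by
    rw [hSfin, Set.ncard_coe_finset, Finset.card_product]
    simp [Finset.card_range, ← mul_pow]
  have hIcard : (Set.Iio (4 ^ m) : Set ℕ).ncard = 4 ^ m := by
    rw [← Finset.coe_range, Set.ncard_coe_finset, Finset.card_range]
  have himg : F '' S = Set.Iio (4 ^ m) := by
    refine Set.eq_of_subset_of_ncard_le (Set.image_subset_iff.2 hmaps) ?_ (Set.finite_Iio _)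
    rw [Set.ncard_image_of_injOn hinj, hScard, hIcard]
  rw [Set.SurjOn, himg]
end

section
/- The bit-twiddling dilation algorithm is correct for 16-bit inputs: for t < 2^16, applying successively r ↦ (r ||| (r <<< 8)) &&& 0x00FF00FF, r ↦ (r ||| (r <<< 4)) &&& 0x0F0F0F0F, r ↦ (r ||| (r <<< 2)) &&& 0x33333333, r ↦ (r ||| (r <<< 1)) &&& 0x55555555 to r = t yields dilate(t). -/
namespace DilateAux

/-- partial dilation sum over the first `n` bits -/
def dsum : ℕ → ℕ → ℕ
  | 0, _ => 0
  | n + 1, x => dsum n x + (x.testBit n).toNat * 4 ^ n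

lemma tb_false {x n i : ℕ} (hx : x < 2 ^ n) (h : n ≤ i) : x.testBit i = false :=
  Nat.testBit_lt_two_pow (lt_of_lt_of_le hx (Nat.pow_le_pow_right (by norm_num) h))

lemma dsum_congr {x y : ℕ} : ∀ {n : ℕ}, (∀ i < n, x.testBit i = y.testBit i) →
    dsum n x = dsum n y := by
  intro n
  induction n with
  | zero => intro _; rfl
  | succ n ih =>
    intro h
    simp only [dsum, ih (fun i hi => h i (by omega)), h n (by omega)]

lemma dsum_split (n m a b : ℕ) (ha : a < 2 ^ n) :
    dsum (n + m) (2 ^ n * b + a) = dsum n a + 4 ^ n * dsum m b := by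
  induction m with
  | zero =>
    simp only [Nat.add_zero, dsum, Nat.mul_zero, Nat.add_zero]
    exact dsum_congr fun i hi => by
      rw [Nat.testBit_two_pow_mul_add _ ha]; simp [hi]
  | succ m ih =>
    have h1 : n + (m + 1) = (n + m) + 1 := rfl
    rw [h1]
    simp only [dsum, ih]
    rw [Nat.testBit_two_pow_mul_add _ ha]
    simp only [show ¬ (n + m < n) by omega, if_false, Nat.add_sub_cancel_left]
    ring

lemma dsum_eq_sum (n x : ℕ) :
    dsum n x = ∑ i ∈ Finset.range n, (x.testBit i).toNat * 4 ^ i := by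
  induction n with
  | zero => rfl
  | succ n ih => rw [Finset.sum_range_succ, ← ih]; rfl

lemma sum_ext {x p q : ℕ} (hpq : p ≤ q) (hx : x < 2 ^ p) :
    ∑ i ∈ Finset.range p, (x.testBit i).toNat * 4 ^ i
      = ∑ i ∈ Finset.range q, (x.testBit i).toNat * 4 ^ i := by
  apply Finset.sum_subset (Finset.range_subset_range.2 hpq)
  intro i _ hi
  rw [Finset.mem_range, not_lt] at hi
  rw [tb_false hx hi]
  simp

lemma dilate_eq (n x : ℕ) (h : x < 2 ^ n) : dilate x = dsum n x := by
  unfold dilate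
  rw [dsum_eq_sum]
  have hx1 : x < 2 ^ (x + 1) :=
    lt_trans (Nat.lt_two_pow_self (n := x)) (Nat.pow_lt_pow_right (by norm_num) (Nat.lt_succ_self x))
  rcases le_total (x + 1) n with hle | hle
  · exact sum_ext hle hx1
  · exact (sum_ext hle h).symm

lemma or_split {n a b c d : ℕ} (ha : a < 2 ^ n) (hc : c < 2 ^ n) :
    (2 ^ n * b + a) ||| (2 ^ n * d + c) = 2 ^ n * (b ||| d) + (a ||| c) := by
  have hor : a ||| c < 2 ^ n := Nat.or_lt_two_pow ha hc
  apply Nat.eq_of_testBit_eq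
  intro j
  rw [Nat.testBit_or, Nat.testBit_two_pow_mul_add _ ha, Nat.testBit_two_pow_mul_add _ hc,
    Nat.testBit_two_pow_mul_add _ hor]
  by_cases h : j < n <;> simp [h, Nat.testBit_or]

lemma and_split {n a b c d : ℕ} (ha : a < 2 ^ n) (hc : c < 2 ^ n) :
    (2 ^ n * b + a) &&& (2 ^ n * d + c) = 2 ^ n * (b &&& d) + (a &&& c) := by
  have hand : a &&& c < 2 ^ n := Nat.and_lt_two_pow _ hc
  apply Nat.eq_of_testBit_eq
  intro j
  rw [Nat.testBit_and, Nat.testBit_two_pow_mul_add _ ha, Nat.testBit_two_pow_mul_add _ hc,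
    Nat.testBit_two_pow_mul_add _ hand]
  by_cases h : j < n <;> simp [h, Nat.testBit_and]

lemma shift_split (n k u v : ℕ) :
    (2 ^ n * v + u) <<< k = 2 ^ n * (v <<< k) + u <<< k := by
  simp only [Nat.shiftLeft_eq]; ring

lemma stage_split (k mlo mhi u v : ℕ) (hm : mlo < 2 ^ 16) (hu : u < 2 ^ 16)
    (huk : u <<< k < 2 ^ 16) :
    ((2 ^ 16 * v + u) ||| ((2 ^ 16 * v + u) <<< k)) &&& (2 ^ 16 * mhi + mlo)
      = 2 ^ 16 * ((v ||| v <<< k) &&& mhi) + ((u ||| u <<< k) &&& mlo) := by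
  rw [shift_split, or_split hu huk, and_split (Nat.or_lt_two_pow hu huk) hm]

lemma step1 (a b : ℕ) (ha : a < 2 ^ 8) (hb : b < 2 ^ 8) :
    ((2 ^ 8 * b + a) ||| ((2 ^ 8 * b + a) <<< 8)) &&& 0x00FF00FF = 2 ^ 16 * b + a := by
  have ha16 : a < 2 ^ 16 := lt_trans ha (by norm_num)
  have hmask : (0x00FF00FF : ℕ) = 2 ^ 16 * (2 ^ 8 - 1) + (2 ^ 8 - 1) := by norm_num
  have hm16 : (2 : ℕ) ^ 8 - 1 < 2 ^ 16 := by norm_num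
  have h255 : ∀ i, Nat.testBit 255 i = decide (i < 8) := fun i => by
    rw [show (255 : ℕ) = 2 ^ 8 - 1 from by norm_num, Nat.testBit_two_pow_sub_one]
  apply Nat.eq_of_testBit_eq
  intro j
  rw [hmask, Nat.testBit_and, Nat.testBit_or, Nat.testBit_shiftLeft,
    Nat.testBit_two_pow_mul_add _ hm16, Nat.testBit_two_pow_mul_add _ ha16,
    Nat.testBit_two_pow_mul_add _ ha]
  by_cases h1 : j < 8
  · simp [h1, show j < 16 by omega, show ¬ 8 ≤ j by omega, h255]
  · by_cases h2 : j < 16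
    · simp [h1, h2, h255, tb_false ha (le_of_not_gt h1)]
    · rw [Nat.testBit_two_pow_mul_add _ ha, tb_false hb (show 8 ≤ j - 8 by omega),
        show j - 8 - 8 = j - 16 from by omega]
      by_cases h3 : j < 24
      · simp [h1, h2, show ¬ j - 8 < 8 by omega, show 8 ≤ j by omega,
          show j - 16 < 8 by omega, h255]
      · rw [tb_false hb (show 8 ≤ j - 16 by omega)]
        simp [h1, h2, show ¬ j - 8 < 8 by omega, show ¬ j - 16 < 8 by omega, h255]

/-- stages 2–4 of the algorithm on a 16-bit chunk -/
def g2 (x : ℕ) : ℕ := (x ||| x <<< 4) &&& 0x0F0F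
def g3 (x : ℕ) : ℕ := (x ||| x <<< 2) &&& 0x3333
def g4 (x : ℕ) : ℕ := (x ||| x <<< 1) &&& 0x5555

set_option maxRecDepth 20000 in
lemma G_eq_dsum : ∀ x : Fin 256, g4 (g3 (g2 x.val)) = dsum 8 x.val := by decide

end DilateAux

open DilateAux in
theorem dilate_algorithm_correct (t : ℕ) (ht : t < 2 ^ 16) :
    let r1 := (t ||| (t <<< 8)) &&& 0x00FF00FF
    let r2 := (r1 ||| (r1 <<< 4)) &&& 0x0F0F0F0F
    let r3 := (r2 ||| (r2 <<< 2)) &&& 0x33333333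
    let r4 := (r3 ||| (r3 <<< 1)) &&& 0x55555555
    r4 = dilate t := by
  dsimp only
  obtain ⟨a, b, ha, hb, rfl⟩ : ∃ a b, a < 2 ^ 8 ∧ b < 2 ^ 8 ∧ t = 2 ^ 8 * b + a := by
    refine ⟨t % 256, t / 256, ?_, ?_, ?_⟩ <;>
      · simp only [show (2:ℕ)^8 = 256 by norm_num, show (2:ℕ)^16 = 65536 by norm_num] at *
        omega
  rw [step1 a b ha hb]
  have ha16 : a < 2 ^ 16 := lt_trans ha (by norm_num)
  have e2 : ((2 ^ 16 * b + a) ||| ((2 ^ 16 * b + a) <<< 4)) &&& 0x0F0F0F0F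
      = 2 ^ 16 * g2 b + g2 a := by
    rw [show (0x0F0F0F0F : ℕ) = 2 ^ 16 * 0x0F0F + 0x0F0F from by norm_num]
    exact stage_split 4 0x0F0F 0x0F0F a b (by norm_num) ha16
      (by rw [Nat.shiftLeft_eq]; norm_num; omega)
  rw [e2]
  have hg2a : g2 a < 2 ^ 16 := lt_of_le_of_lt Nat.and_le_right (by norm_num)
  have hg2s : g2 a <<< 2 < 2 ^ 16 := by
    have h : g2 a ≤ 0x0F0F := Nat.and_le_right
    rw [Nat.shiftLeft_eq]; norm_num; omega
  have e3 : ((2 ^ 16 * g2 b + g2 a) ||| ((2 ^ 16 * g2 b + g2 a) <<< 2)) &&& 0x33333333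
      = 2 ^ 16 * g3 (g2 b) + g3 (g2 a) := by
    rw [show (0x33333333 : ℕ) = 2 ^ 16 * 0x3333 + 0x3333 from by norm_num]
    exact stage_split 2 0x3333 0x3333 (g2 a) (g2 b) (by norm_num) hg2a hg2s
  rw [e3]
  have hg3a : g3 (g2 a) < 2 ^ 16 := lt_of_le_of_lt Nat.and_le_right (by norm_num)
  have hg3s : g3 (g2 a) <<< 1 < 2 ^ 16 := by
    have h : g3 (g2 a) ≤ 0x3333 := Nat.and_le_right
    rw [Nat.shiftLeft_eq]; norm_num; omega
  have e4 : ((2 ^ 16 * g3 (g2 b) + g3 (g2 a))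
        ||| ((2 ^ 16 * g3 (g2 b) + g3 (g2 a)) <<< 1)) &&& 0x55555555
      = 2 ^ 16 * g4 (g3 (g2 b)) + g4 (g3 (g2 a)) := by
    rw [show (0x55555555 : ℕ) = 2 ^ 16 * 0x5555 + 0x5555 from by norm_num]
    exact stage_split 1 0x5555 0x5555 (g3 (g2 a)) (g3 (g2 b)) (by norm_num) hg3a hg3s
  rw [e4]
  have ht16 : 2 ^ 8 * b + a < 2 ^ 16 := by
    simp only [show (2:ℕ)^8 = 256 by norm_num, show (2:ℕ)^16 = 65536 by norm_num] at *
    omega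
  rw [dilate_eq 16 _ ht16, show (16 : ℕ) = 8 + 8 from rfl, dsum_split 8 8 a b ha]
  have ha' : a < 256 := by simpa using ha
  have hb' : b < 256 := by simpa using hb
  rw [G_eq_dsum ⟨a, ha'⟩, G_eq_dsum ⟨b, hb'⟩]
  have h48 : (4 : ℕ) ^ 8 = 2 ^ 16 := by norm_num
  rw [h48]; ring
end
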